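/- Let $\ell$ be a prime, $q$ a prime power not divisible by $\ell$, and let $n$ be the multiplicative order of $q$ modulo $\ell$. Put $r = \mathrm{ord}_\ell(q^n - 1)$. Suppose $a$ is an integer such that the orbit of $a$ under multiplication by $q$ in $\mathbb{Z}/(q^n-1)\mathbb{Z}$ has size strictly less than $n$. Then $\ell^r$ divides $a$. -/
import Mathlib


theorem stmt_1 (ℓ q n r : ℕ) (hℓ : ℓ.Prime) (hq : IsPrimePow q) (hndvd : ¬ ℓ ∣ q)
    (hn : orderOf (q : ZMod ℓ) = n) (hr : r = padicValNat ℓ (q ^ n - 1))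
    (a : ℤ)
    (horb : sInf {b : ℕ | 0 < b ∧ ((q : ℤ) ^ n - 1) ∣ a * ((q : ℤ) ^ b - 1)} < n) :
    (ℓ : ℤ) ^ r ∣ a := by
  have hq2 : 2 ≤ q := hq.two_le
  have hnpos : 0 < n := lt_of_le_of_lt (Nat.zero_le _) horb
  have hqn : 1 < q ^ n := Nat.one_lt_pow hnpos.ne' (by omega)
  -- the set is nonempty: n belongs to it
  have hmem : n ∈ {b : ℕ | 0 < b ∧ ((q : ℤ) ^ n - 1) ∣ a * ((q : ℤ) ^ b - 1)} :=
    ⟨hnpos, ⟨a, mul_comm a _⟩⟩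
  obtain ⟨hbpos, hbdvd⟩ := Nat.sInf_mem (Set.nonempty_of_mem hmem)
  set b := sInf {b : ℕ | 0 < b ∧ ((q : ℤ) ^ n - 1) ∣ a * ((q : ℤ) ^ b - 1)} with hb
  -- ℓ^r divides q^n - 1
  have hdvd1 : (ℓ : ℤ) ^ r ∣ (q : ℤ) ^ n - 1 := by
    have : ℓ ^ r ∣ q ^ n - 1 := by
      rw [hr]; exact pow_padicValNat_dvd
    have := Int.natCast_dvd_natCast.mpr this
    push_cast [Nat.cast_sub hqn.le] at this
    exact_mod_cast this
  have hdvd2 : (ℓ : ℤ) ^ r ∣ a * ((q : ℤ) ^ b - 1) := hdvd1.trans hbdvd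
  -- ℓ does not divide q^b - 1
  have hnd : ¬ (ℓ : ℤ) ∣ (q : ℤ) ^ b - 1 := by
    intro h
    haveI : Fact ℓ.Prime := ⟨hℓ⟩
    have h0 : (((q : ℤ) ^ b - 1 : ℤ) : ZMod ℓ) = 0 :=
      (ZMod.intCast_zmod_eq_zero_iff_dvd _ _).mpr h
    push_cast at h0
    have h1 : (q : ZMod ℓ) ^ b = 1 := by
      have := sub_eq_zero.mp h0
      exact_mod_cast this
    have := orderOf_dvd_of_pow_eq_one h1
    rw [hn] at this
    exact absurd (Nat.le_of_dvd hbpos this) (not_le.mpr horb)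
  have hprime : Prime (ℓ : ℤ) := Nat.prime_iff_prime_int.mp hℓ
  have hcop : IsCoprime ((ℓ : ℤ) ^ r) ((q : ℤ) ^ b - 1) :=
    (hprime.coprime_iff_not_dvd.mpr hnd).pow_left
  exact hcop.dvd_of_dvd_mul_right hdvd2
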